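/- Let (S_n) be a centered real random walk with Var(S_1) > 0 and E[e^{u S_1}] < ∞ for all u ∈ (−(1+η), η) for some η > 0. Then there exists a constant c' > 0 such that for all L ≥ 1 and all 0 ≤ a ≤ L: ℙ_a(τ_0^- < τ_L^+) ≤ (L − a + c')/L and ℙ_a(τ_0^- > τ_L^+) ≤ (a + c')/L. -/

import Mathlib

open MeasureTheory ProbabilityTheory Filter Topology Real
open scoped ENNReal NNReal

variable {Ω : Type*} [MeasurableSpace Ω]

/-- The random walk started at `x` with increments `X`. -/
noncomputable def walk (X : ℕ → Ω → ℝ) (x : ℝ) (n : ℕ) (ω : Ω) : ℝ :=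
  x + ∑ i ∈ Finset.range n, X i ω

/-- `τ_a^+`: the first time the walk (started at `x`) exceeds level `a`, as an
extended natural number (`⊤` if the walk never exceeds `a`). -/
noncomputable def hitAbove (X : ℕ → Ω → ℝ) (x a : ℝ) (ω : Ω) : ℕ∞ :=
  ⨅ (n : ℕ) (_ : a < walk X x n ω), (n : ℕ∞)

/-- `τ_a^-`: the first time the walk (started at `x`) goes below level `a`. -/
noncomputable def hitBelow (X : ℕ → Ω → ℝ) (x a : ℝ) (ω : Ω) : ℕ∞ :=
  ⨅ (n : ℕ) (_ : walk X x n ω < a), (n : ℕ∞)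

/-- `S_{τ_a^+}`: the walk stopped when it first exceeds `a` (junk value if never). -/
noncomputable def stopAbove (X : ℕ → Ω → ℝ) (x a : ℝ) (ω : Ω) : ℝ :=
  walk X x (hitAbove X x a ω).toNat ω

/-- `S_{τ_a^-}`: the walk stopped when it first goes below `a` (junk value if never). -/
noncomputable def stopBelow (X : ℕ → Ω → ℝ) (x a : ℝ) (ω : Ω) : ℝ :=
  walk X x (hitBelow X x a ω).toNat ω

/-- A real random variable has non-arithmetic distribution: its law is not
supported on any lattice `hℤ`. -/
def NonArithmetic (Y : Ω → ℝ) (μ : Measure Ω) : Prop :=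
  ¬ ∃ h : ℝ, ∀ᵐ ω ∂μ, ∃ k : ℤ, Y ω = k * h

set_option linter.unusedSectionVars false
set_option linter.unusedVariables false

noncomputable def gfun (δ y : ℝ) : ℝ := y + 1 - Real.exp (-(δ * y))

noncomputable def ffun (δ M L y : ℝ) : ℝ := min L (gfun δ (max y (-M)))

lemma gfun_mono {δ : ℝ} (hδ : 0 < δ) : Monotone (gfun δ) := by
  intro y z h
  have : Real.exp (-(δ * z)) ≤ Real.exp (-(δ * y)) := by
    apply Real.exp_le_exp.2; nlinarith
  simp only [gfun]; linarith

lemma gfun_negM_nonpos {δ M : ℝ} (hδ : 0 < δ) (hM : 0 ≤ M) : gfun δ (-M) ≤ 0 := by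
  have h1 : (1:ℝ) ≤ Real.exp (-(δ * -M)) := by
    apply Real.one_le_exp; nlinarith
  simp only [gfun]; linarith

lemma ffun_le {δ M L y : ℝ} : ffun δ M L y ≤ L := min_le_left _ _

lemma le_ffun {δ M L y : ℝ} (hδ : 0 < δ) (hM : 0 ≤ M) (hL : 1 ≤ L) :
    gfun δ (-M) ≤ ffun δ M L y := by
  refine le_min (le_trans (gfun_negM_nonpos hδ hM) (by linarith)) ?_
  exact gfun_mono hδ (le_max_right _ _)

lemma ffun_cont {δ M L : ℝ} : Continuous (ffun δ M L) := by
  have hg : Continuous (gfun δ) := by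
    unfold gfun; fun_prop
  exact continuous_const.min (hg.comp (continuous_id.max continuous_const))

lemma ffun_eq_of_gt {δ M L y : ℝ} (hδ : 0 < δ) (hM : 0 ≤ M) (hL : 1 ≤ L) (hy : L < y) :
    ffun δ M L y = L := by
  have hmax : max y (-M) = y := max_eq_left (by linarith)
  have h1 : Real.exp (-(δ * L)) ≤ 1 := Real.exp_le_one_iff.2 (by nlinarith)
  have h2 : L ≤ gfun δ y := by
    have := gfun_mono hδ (le_of_lt hy)
    simp only [gfun] at this ⊢
    nlinarith
  simp only [ffun, hmax]
  exact min_eq_left h2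

lemma ffun_abs_le {δ M L y : ℝ} (hδ : 0 < δ) (hM : 0 ≤ M) (hL : 1 ≤ L) :
    |ffun δ M L y| ≤ max L (-(gfun δ (-M))) := by
  rw [abs_le]
  constructor
  · have := le_ffun (y := y) hδ hM hL
    have h2 : -(max L (-(gfun δ (-M)))) ≤ -(-(gfun δ (-M))) := by
      simp only [neg_le_neg_iff]; exact le_max_right _ _
    simp only [neg_neg] at h2; linarith
  · exact le_trans ffun_le (le_max_left _ _)

/-- The pointwise truncation-error bound. -/
lemma ffun_pointwise {δ δ' M L y : ℝ} (hδ : 0 < δ) (hδ' : δ < δ') (hM : 0 ≤ M) :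
    ffun δ M L y ≤ gfun δ y
      + (1 + 1/δ) * Real.exp (-((δ' - δ) * M)) * Real.exp (-(δ' * y)) := by
  have hC : 0 < (1 + 1/δ) := by positivity
  rcases le_or_gt (-M) y with h | h
  · have hmax : max y (-M) = y := max_eq_left h
    have : (0:ℝ) ≤ (1 + 1/δ) * Real.exp (-((δ' - δ) * M)) * Real.exp (-(δ' * y)) := by
      positivity
    calc ffun δ M L y ≤ gfun δ (max y (-M)) := min_le_right _ _
      _ = gfun δ y := by rw [hmax]
      _ ≤ _ := by linarith
  · -- y < -M ≤ 0
    have hmax : max y (-M) = -M := max_eq_right (le_of_lt h)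
    have hy0 : y < 0 := by linarith
    -- -gfun δ y ≤ (1 + 1/δ) * exp (-(δ * y))
    have h1 : -δ * y ≤ Real.exp (-(δ * y)) := by
      have := Real.add_one_le_exp (-(δ * y)); nlinarith
    have h2 : -(gfun δ y) ≤ (1 + 1/δ) * Real.exp (-(δ * y)) := by
      simp only [gfun]
      have hδ0 : (0:ℝ) < δ := hδ
      have : -y ≤ (1/δ) * Real.exp (-(δ * y)) := by
        rw [div_mul_eq_mul_div, le_div_iff₀ hδ0]; nlinarith
      nlinarith [Real.exp_pos (-(δ * y))]
    -- exp (-(δ * y)) ≤ exp (-((δ'-δ)*M)) * exp (-(δ' * y))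
    have h3 : Real.exp (-(δ * y)) ≤ Real.exp (-((δ' - δ) * M)) * Real.exp (-(δ' * y)) := by
      rw [← Real.exp_add]
      apply Real.exp_le_exp.2
      nlinarith
    have h4 : gfun δ (-M) ≤ 0 := gfun_negM_nonpos hδ hM
    calc ffun δ M L y ≤ gfun δ (max y (-M)) := min_le_right _ _
      _ = gfun δ (-M) := by rw [hmax]
      _ ≤ gfun δ y + (-(gfun δ y)) := by linarith
      _ ≤ _ := by nlinarith

/-- Integrability of `ffun` composed with a measurable map, on a probability space. -/
lemma ffun_comp_integrable {δ M L : ℝ} (hδ : 0 < δ) (hM : 0 ≤ M) (hL : 1 ≤ L)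
    (μ : Measure Ω) [IsProbabilityMeasure μ] {W : Ω → ℝ} (hW : Measurable W) :
    Integrable (fun ω => ffun δ M L (W ω)) μ := by
  refine Integrable.mono' (integrable_const (max L (-(gfun δ (-M)))))
    ((ffun_cont.measurable.comp hW).aestronglyMeasurable)
    (Eventually.of_forall fun ω => ?_)
  rw [Real.norm_eq_abs]
  exact ffun_abs_le hδ hM hL

/-- The one-step supermartingale inequality. -/
lemma key_step (μ : Measure Ω) [IsProbabilityMeasure μ]
    {Y : Ω → ℝ} (hYm : Measurable Y) (hYint : Integrable Y μ)
    (hcent : ∫ ω, Y ω ∂μ = 0)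
    {δ δ' M L : ℝ} (hδ : 0 < δ) (hδ' : δ < δ') (hM : 0 ≤ M) (hL : 1 ≤ L)
    (hint1 : Integrable (fun ω => Real.exp (-(δ * Y ω))) μ)
    (hint2 : Integrable (fun ω => Real.exp (-(δ' * Y ω))) μ)
    (hMcond : (1 + 1/δ) * Real.exp (-((δ' - δ) * M)) * (∫ ω, Real.exp (-(δ' * Y ω)) ∂μ)
        ≤ (∫ ω, Real.exp (-(δ * Y ω)) ∂μ) - 1)
    {z : ℝ} (hz0 : 0 ≤ z) (hzL : z ≤ L) :
    ∫ ω, ffun δ M L (z + Y ω) ∂μ ≤ ffun δ M L z := by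
  set A := ∫ ω, Real.exp (-(δ * Y ω)) ∂μ with hA
  set A' := ∫ ω, Real.exp (-(δ' * Y ω)) ∂μ with hA'
  have hA'0 : 0 ≤ A' := integral_nonneg fun ω => (Real.exp_pos _).le
  have hintf : Integrable (fun ω => ffun δ M L (z + Y ω)) μ :=
    ffun_comp_integrable hδ hM hL μ (measurable_const.add hYm)
  have hmaxz : max z (-M) = z := max_eq_left (by linarith)
  rcases le_or_gt L (gfun δ z) with hcase | hcase
  · -- f z = L and f ≤ L everywhere
    have hfz : ffun δ M L z = L := by
      simp only [ffun, hmaxz]; exact min_eq_left hcase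
    rw [hfz]
    calc ∫ ω, ffun δ M L (z + Y ω) ∂μ ≤ ∫ _ω, L ∂μ :=
          integral_mono hintf (integrable_const L) fun ω => ffun_le
      _ = L := by simp
  · have hfz : ffun δ M L z = gfun δ z := by
      simp only [ffun, hmaxz]; exact min_eq_right hcase.le
    set C := (1 + 1/δ) * Real.exp (-((δ' - δ) * M)) with hC
    have hC0 : 0 < C := by positivity
    -- integrable RHS pieces
    have hint1' : Integrable (fun ω => Real.exp (-(δ * (z + Y ω)))) μ := by
      have : (fun ω => Real.exp (-(δ * (z + Y ω))))
          = fun ω => Real.exp (-(δ * z)) * Real.exp (-(δ * Y ω)) := by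
        funext ω; rw [← Real.exp_add]; ring_nf
      rw [this]; exact hint1.const_mul _
    have hint2' : Integrable (fun ω => Real.exp (-(δ' * (z + Y ω)))) μ := by
      have : (fun ω => Real.exp (-(δ' * (z + Y ω))))
          = fun ω => Real.exp (-(δ' * z)) * Real.exp (-(δ' * Y ω)) := by
        funext ω; rw [← Real.exp_add]; ring_nf
      rw [this]; exact hint2.const_mul _
    have hgy : ∀ ω : Ω, gfun δ (z + Y ω)
        = (z + 1) + (Y ω - Real.exp (-(δ * z)) * Real.exp (-(δ * Y ω))) := by
      intro ω
      have harg : -(δ * (z + Y ω)) = -(δ * z) + -(δ * Y ω) := by ring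
      simp only [gfun, harg, Real.exp_add]; ring
    have hsub : Integrable (fun ω => Y ω - Real.exp (-(δ * z)) * Real.exp (-(δ * Y ω))) μ :=
      hYint.sub (hint1.const_mul _)
    have hintg : Integrable (fun ω => gfun δ (z + Y ω)) μ := by
      rw [show (fun ω => gfun δ (z + Y ω))
          = fun ω => (z + 1) + (Y ω - Real.exp (-(δ * z)) * Real.exp (-(δ * Y ω)))
          from funext hgy]
      exact (integrable_const _).add hsub
    have hintrhs : Integrable
        (fun ω => gfun δ (z + Y ω) + C * Real.exp (-(δ' * (z + Y ω)))) μ :=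
      hintg.add (hint2'.const_mul _)
    have hle : ∫ ω, ffun δ M L (z + Y ω) ∂μ
        ≤ ∫ ω, (gfun δ (z + Y ω) + C * Real.exp (-(δ' * (z + Y ω)))) ∂μ := by
      refine integral_mono hintf hintrhs fun ω => ?_
      have := ffun_pointwise (δ := δ) (δ' := δ') (M := M) (L := L) (y := z + Y ω) hδ hδ' hM
      simpa [hC, mul_assoc] using this
    -- compute the RHS integral
    have h5 : ∫ ω, gfun δ (z + Y ω) ∂μ = (z + 1) - Real.exp (-(δ * z)) * A := by
      rw [show (fun ω => gfun δ (z + Y ω))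
          = fun ω => (z + 1) + (Y ω - Real.exp (-(δ * z)) * Real.exp (-(δ * Y ω)))
          from funext hgy]
      rw [integral_add (integrable_const _) hsub,
        integral_sub hYint (hint1.const_mul _), integral_const_mul, integral_const, hcent,
        ← hA]
      simp only [probReal_univ, smul_eq_mul, one_mul]
      ring
    have h6 : ∫ ω, C * Real.exp (-(δ' * (z + Y ω))) ∂μ
        = C * (Real.exp (-(δ' * z)) * A') := by
      rw [integral_const_mul]
      congr 1
      rw [show (fun ω => Real.exp (-(δ' * (z + Y ω))))
          = fun ω => Real.exp (-(δ' * z)) * Real.exp (-(δ' * Y ω)) from funext fun ω => by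
            rw [show -(δ' * (z + Y ω)) = -(δ' * z) + -(δ' * Y ω) by ring, Real.exp_add]]
      rw [integral_const_mul, ← hA']
    have hcomp : ∫ ω, (gfun δ (z + Y ω) + C * Real.exp (-(δ' * (z + Y ω)))) ∂μ
        = ((z + 1) - Real.exp (-(δ * z)) * A) + C * (Real.exp (-(δ' * z)) * A') := by
      rw [integral_add hintg (hint2'.const_mul _), h5, h6]
    -- final comparison
    have hexpz : Real.exp (-(δ' * z)) ≤ Real.exp (-(δ * z)) :=
      Real.exp_le_exp.2 (by nlinarith)
    have hfinal : ((z + 1) - Real.exp (-(δ * z)) * A) + C * (Real.exp (-(δ' * z)) * A')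
        ≤ gfun δ z := by
      simp only [gfun]
      have h1 : C * (Real.exp (-(δ' * z)) * A') ≤ Real.exp (-(δ * z)) * (C * A') := by
        nlinarith [mul_le_mul_of_nonneg_left hexpz (mul_nonneg hC0.le hA'0)]
      have h2 : Real.exp (-(δ * z)) * (C * A') ≤ Real.exp (-(δ * z)) * (A - 1) :=
        mul_le_mul_of_nonneg_left hMcond (Real.exp_pos _).le
      nlinarith [Real.exp_pos (-(δ * z))]
    rw [hfz]
    calc ∫ ω, ffun δ M L (z + Y ω) ∂μ
        ≤ ((z + 1) - Real.exp (-(δ * z)) * A) + C * (Real.exp (-(δ' * z)) * A') := by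
          rw [← hcomp]; exact hle
      _ ≤ gfun δ z := hfinal

/-! The walk frozen at the first exit from `[0, L]`. -/

noncomputable def stopF (a L : ℝ) : ℕ → (ℕ → ℝ) → ℝ
  | 0, _ => a
  | n+1, v => if 0 ≤ stopF a L n v ∧ stopF a L n v ≤ L then stopF a L n v + v n
      else stopF a L n v

lemma stopF_measurable (a L : ℝ) (n : ℕ) : Measurable (stopF a L n) := by
  induction n with
  | zero => exact measurable_const
  | succ n ih =>
    have hs : MeasurableSet {v : ℕ → ℝ | 0 ≤ stopF a L n v ∧ stopF a L n v ≤ L} := by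
      rw [Set.setOf_and]
      exact (measurableSet_le measurable_const ih).inter (measurableSet_le ih measurable_const)
    exact Measurable.ite hs (ih.add (measurable_pi_apply n)) ih

lemma stopF_congr (a L : ℝ) : ∀ (n : ℕ) (v w : ℕ → ℝ), (∀ i, i < n → v i = w i) →
    stopF a L n v = stopF a L n w := by
  intro n
  induction n with
  | zero => intro v w _; rfl
  | succ n ih =>
    intro v w h
    have h1 : stopF a L n v = stopF a L n w := ih v w fun i hi => h i (Nat.lt_succ_of_lt hi)
    have h2 : v n = w n := h n (Nat.lt_succ_self n)
    simp only [stopF, h1, h2]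

noncomputable def ZW (X : ℕ → Ω → ℝ) (a L : ℝ) (n : ℕ) (ω : Ω) : ℝ :=
  stopF a L n (fun i => X i ω)

lemma ZW_measurable {X : ℕ → Ω → ℝ} (hmeas : ∀ i, Measurable (X i)) (a L : ℝ) (n : ℕ) :
    Measurable (ZW X a L n) :=
  (stopF_measurable a L n).comp (measurable_pi_lambda _ fun i => hmeas i)

lemma ZW_indep {μ : Measure Ω} {X : ℕ → Ω → ℝ} (hmeas : ∀ i, Measurable (X i))
    (hindep : iIndepFun X μ) (a L : ℝ) (n : ℕ) :
    IndepFun (ZW X a L n) (X n) μ := by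
  classical
  have hd : Disjoint (Finset.range n) ({n} : Finset ℕ) := by
    simp only [Finset.disjoint_left, Finset.mem_range, Finset.mem_singleton]
    omega
  have h := hindep.indepFun_finset (Finset.range n) {n} hd hmeas
  set φ : ({ x // x ∈ Finset.range n } → ℝ) → ℝ :=
    fun v => stopF a L n (fun i => if h : i ∈ Finset.range n then v ⟨i, h⟩ else 0) with hφdef
  have hφ : Measurable φ := by
    apply (stopF_measurable a L n).comp
    apply measurable_pi_lambda
    intro i
    by_cases hi : i ∈ Finset.range n
    · simp only [hi, dif_pos]
      exact measurable_pi_apply _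
    · simp only [hi, dif_neg, not_false_eq_true]
      exact measurable_const
  set ψ : ({ x // x ∈ ({n} : Finset ℕ) } → ℝ) → ℝ :=
    fun v => v ⟨n, Finset.mem_singleton_self n⟩ with hψdef
  have hψ : Measurable ψ := measurable_pi_apply _
  have h2 := h.comp hφ hψ
  have hl : (φ ∘ fun ω (i : { x // x ∈ Finset.range n }) => X i.1 ω) = ZW X a L n := by
    funext ω
    simp only [Function.comp_apply, hφdef, ZW]
    apply stopF_congr
    intro i hi
    simp [Finset.mem_range.2 hi]
  have hr : (ψ ∘ fun ω (i : { x // x ∈ ({n} : Finset ℕ) }) => X i.1 ω) = X n := rfl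
  rwa [hl, hr] at h2

lemma ZW_frozen {X : ℕ → Ω → ℝ} {a L : ℝ} {n : ℕ} {ω : Ω} (h : L < ZW X a L n ω) :
    ZW X a L (n+1) ω = ZW X a L n ω := by
  simp only [ZW, stopF]
  rw [if_neg]
  rintro ⟨-, h2⟩
  exact absurd h (not_lt.2 h2)

lemma walk_zero (X : ℕ → Ω → ℝ) (x : ℝ) (ω : Ω) : walk X x 0 ω = x := by
  simp [walk]

lemma walk_succ (X : ℕ → Ω → ℝ) (x : ℝ) (n : ℕ) (ω : Ω) :
    walk X x (n+1) ω = walk X x n ω + X n ω := by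
  simp [walk, Finset.sum_range_succ]; ring

/-! The iterated supermartingale bound. -/

lemma integral_ffun_ZW_le (μ : Measure Ω) [IsProbabilityMeasure μ]
    {X : ℕ → Ω → ℝ} (hmeas : ∀ i, Measurable (X i))
    (hindep : iIndepFun X μ)
    (hident : ∀ i, IdentDistrib (X i) (X 0) μ μ)
    {δ δ' M L : ℝ} (hδ : 0 < δ) (hδ' : δ < δ') (hM : 0 ≤ M) (hL : 1 ≤ L)
    (hYint : Integrable (X 0) μ) (hcent : ∫ ω, X 0 ω ∂μ = 0)
    (hint1 : Integrable (fun ω => Real.exp (-(δ * X 0 ω))) μ)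
    (hint2 : Integrable (fun ω => Real.exp (-(δ' * X 0 ω))) μ)
    (hMcond : (1 + 1/δ) * Real.exp (-((δ' - δ) * M)) * (∫ ω, Real.exp (-(δ' * X 0 ω)) ∂μ)
        ≤ (∫ ω, Real.exp (-(δ * X 0 ω)) ∂μ) - 1)
    (a : ℝ) :
    ∀ n, ∫ ω, ffun δ M L (ZW X a L n ω) ∂μ ≤ ffun δ M L a := by
  intro n
  induction n with
  | zero =>
    have : (fun ω => ffun δ M L (ZW X a L 0 ω)) = fun _ => ffun δ M L a := rfl
    rw [this, integral_const]
    simp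
  | succ n ih =>
    classical
    set W := ZW X a L n with hW
    have hWm : Measurable W := ZW_measurable hmeas a L n
    set Ff : ℝ × ℝ → ℝ :=
      fun p => ffun δ M L (if 0 ≤ p.1 ∧ p.1 ≤ L then p.1 + p.2 else p.1) with hFf
    have hsm : MeasurableSet {p : ℝ × ℝ | 0 ≤ p.1 ∧ p.1 ≤ L} := by
      rw [Set.setOf_and]
      exact (measurableSet_le measurable_const measurable_fst).inter
        (measurableSet_le measurable_fst measurable_const)
    have hFfm : Measurable Ff :=
      ffun_cont.measurable.comp
        (Measurable.ite hsm (measurable_fst.add measurable_snd) measurable_fst)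
    have hpt : (fun ω => ffun δ M L (ZW X a L (n+1) ω)) = fun ω => Ff (W ω, X n ω) := by
      funext ω
      simp only [hFf, ZW, stopF, hW]
    have hpm : Measurable (fun ω => (W ω, X n ω)) := hWm.prodMk (hmeas n)
    have hindepWX : IndepFun W (X n) μ := ZW_indep hmeas hindep a L n
    have hmapeq : μ.map (fun ω => (W ω, X n ω)) = (μ.map W).prod (μ.map (X n)) :=
      (indepFun_iff_map_prod_eq_prod_map_map hWm.aemeasurable
        (hmeas n).aemeasurable).mp hindepWX
    haveI : IsProbabilityMeasure (μ.map W) := Measure.isProbabilityMeasure_map hWm.aemeasurable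
    haveI : IsProbabilityMeasure (μ.map (X n)) :=
      Measure.isProbabilityMeasure_map (hmeas n).aemeasurable
    have hFfint : Integrable Ff ((μ.map W).prod (μ.map (X n))) := by
      refine Integrable.mono' (integrable_const (max L (-(gfun δ (-M)))))
        hFfm.aestronglyMeasurable (Eventually.of_forall fun p => ?_)
      rw [Real.norm_eq_abs]
      exact ffun_abs_le hδ hM hL
    have step1 : ∫ ω, Ff (W ω, X n ω) ∂μ = ∫ p, Ff p ∂((μ.map W).prod (μ.map (X n))) := by
      rw [← hmapeq, integral_map hpm.aemeasurable hFfm.aestronglyMeasurable]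
    have step2 : ∫ p, Ff p ∂((μ.map W).prod (μ.map (X n)))
        = ∫ z, (∫ x, Ff (z, x) ∂(μ.map (X n))) ∂(μ.map W) := integral_prod Ff hFfint
    have hinner : ∀ z : ℝ, ∫ x, Ff (z, x) ∂(μ.map (X n)) ≤ ffun δ M L z := by
      intro z
      by_cases hz : 0 ≤ z ∧ z ≤ L
      · have heq : (fun x => Ff (z, x)) = fun x => ffun δ M L (z + x) := by
          funext x; simp only [hFf]; rw [if_pos hz]
        have hcont : Continuous fun x : ℝ => ffun δ M L (z + x) :=
          ffun_cont.comp (continuous_const.add continuous_id)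
        rw [heq, (hident n).map_eq,
          integral_map (hmeas 0).aemeasurable hcont.aestronglyMeasurable]
        exact key_step μ (hmeas 0) hYint hcent hδ hδ' hM hL hint1 hint2 hMcond hz.1 hz.2
      · have : (fun x => Ff (z, x)) = fun _ => ffun δ M L z := by
          funext x; simp only [hFf, hz, if_neg, not_false_eq_true]
        rw [this, integral_const]
        simp
    have hint_inner : Integrable (fun z => ∫ x, Ff (z, x) ∂(μ.map (X n))) (μ.map W) :=
      hFfint.integral_prod_left
    have hint_ffun : Integrable (fun z => ffun δ M L z) (μ.map W) :=
      ffun_comp_integrable hδ hM hL (μ.map W) measurable_id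
    have step3 : ∫ z, (∫ x, Ff (z, x) ∂(μ.map (X n))) ∂(μ.map W)
        ≤ ∫ z, ffun δ M L z ∂(μ.map W) :=
      integral_mono hint_inner hint_ffun hinner
    have step4 : ∫ z, ffun δ M L z ∂(μ.map W) = ∫ ω, ffun δ M L (W ω) ∂μ :=
      integral_map hWm.aemeasurable ffun_cont.aestronglyMeasurable
    calc ∫ ω, ffun δ M L (ZW X a L (n+1) ω) ∂μ
        = ∫ ω, Ff (W ω, X n ω) ∂μ := by rw [hpt]
      _ = ∫ p, Ff p ∂((μ.map W).prod (μ.map (X n))) := step1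
      _ = ∫ z, (∫ x, Ff (z, x) ∂(μ.map (X n))) ∂(μ.map W) := step2
      _ ≤ ∫ z, ffun δ M L z ∂(μ.map W) := step3
      _ = ∫ ω, ffun δ M L (W ω) ∂μ := step4
      _ ≤ ffun δ M L a := ih

/-! From the supermartingale bound to the exit probability bound. -/

lemma subset_union_D {X : ℕ → Ω → ℝ} {a L : ℝ} :
    {ω | hitAbove X a L ω < hitBelow X a 0 ω} ⊆ ⋃ n, {ω | L < ZW X a L n ω} := by
  intro ω hω
  simp only [Set.mem_setOf_eq] at hω
  have hne : hitAbove X a L ω ≠ ⊤ := ne_top_of_lt hω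
  have hex : ∃ n, L < walk X a n ω := by
    by_contra h
    push_neg at h
    apply hne
    simp only [hitAbove, iInf_eq_top]
    intro n hn
    exact absurd hn (not_lt.2 (h n))
  set t := Nat.find hex with ht
  have hPt : L < walk X a t ω := Nat.find_spec hex
  have hmin : ∀ k, k < t → ¬ (L < walk X a k ω) := fun k hk => Nat.find_min hex hk
  have h2 : (t : ℕ∞) ≤ hitAbove X a L ω := by
    refine le_iInf₂ fun n hn => ?_
    exact_mod_cast Nat.find_min' hex hn
  have hlow : ∀ k, k ≤ t → 0 ≤ walk X a k ω := by
    intro k hk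
    by_contra h
    push_neg at h
    have h1 : hitBelow X a 0 ω ≤ (k : ℕ∞) := iInf₂_le k h
    have h3 : (t : ℕ∞) < (k : ℕ∞) := lt_of_le_of_lt h2 (lt_of_lt_of_le hω h1)
    have : t < k := by exact_mod_cast h3
    omega
  have hZeq : ∀ k, k ≤ t → ZW X a L k ω = walk X a k ω := by
    intro k
    induction k with
    | zero =>
      intro _
      simp only [ZW, stopF, walk_zero]
    | succ k ih =>
      intro hk
      have hkt : k < t := Nat.lt_of_succ_le hk
      have h0 : 0 ≤ walk X a k ω := hlow k hkt.le
      have h1 : walk X a k ω ≤ L := not_lt.1 (hmin k hkt)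
      have ihh := ih hkt.le
      show stopF a L (k+1) (fun i => X i ω) = walk X a (k+1) ω
      have hzk : stopF a L k (fun i => X i ω) = walk X a k ω := ihh
      simp only [stopF, hzk]
      rw [if_pos ⟨h0, h1⟩, walk_succ]
  refine Set.mem_iUnion.2 ⟨t, ?_⟩
  simp only [Set.mem_setOf_eq]
  rw [hZeq t le_rfl]
  exact hPt

lemma main_up_bound (μ : Measure Ω) [IsProbabilityMeasure μ]
    {X : ℕ → Ω → ℝ} (hmeas : ∀ i, Measurable (X i))
    (hindep : iIndepFun X μ)
    (hident : ∀ i, IdentDistrib (X i) (X 0) μ μ)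
    {δ δ' M : ℝ} (hδ : 0 < δ) (hδ' : δ < δ') (hM : 0 ≤ M)
    (hYint : Integrable (X 0) μ) (hcent : ∫ ω, X 0 ω ∂μ = 0)
    (hint1 : Integrable (fun ω => Real.exp (-(δ * X 0 ω))) μ)
    (hint2 : Integrable (fun ω => Real.exp (-(δ' * X 0 ω))) μ)
    (hMcond : (1 + 1/δ) * Real.exp (-((δ' - δ) * M)) * (∫ ω, Real.exp (-(δ' * X 0 ω)) ∂μ)
        ≤ (∫ ω, Real.exp (-(δ * X 0 ω)) ∂μ) - 1)
    {L : ℝ} (hL : 1 ≤ L) {a : ℝ} (ha0 : 0 ≤ a) (haL : a ≤ L) :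
    μ {ω | hitAbove X a L ω < hitBelow X a 0 ω}
      ≤ ENNReal.ofReal ((a + (1 + (M + Real.exp (δ * M)))) / L) := by
  set R := M + Real.exp (δ * M) with hR
  have hR0 : 0 ≤ R := by positivity
  have hgR : -R ≤ gfun δ (-M) := by
    simp only [gfun, hR]
    have : -(δ * -M) = δ * M := by ring
    rw [this]
    linarith
  set D : ℕ → Set Ω := fun n => {ω | L < ZW X a L n ω} with hD
  have hDm : ∀ n, MeasurableSet (D n) :=
    fun n => measurableSet_lt measurable_const (ZW_measurable hmeas a L n)
  have hDmono : Monotone D := by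
    apply monotone_nat_of_le_succ
    intro n ω hω
    simp only [hD, Set.mem_setOf_eq] at hω ⊢
    rw [ZW_frozen hω]
    exact hω
  have hL0 : (0:ℝ) < L := by linarith
  have hbound : ∀ n, μ (D n) ≤ ENNReal.ofReal ((a + (1 + R)) / L) := by
    intro n
    set p := (μ (D n)).toReal with hp
    have hp0 : 0 ≤ p := ENNReal.toReal_nonneg
    have hp1 : p ≤ 1 := by
      rw [hp]
      exact ENNReal.toReal_le_of_le_ofReal zero_le_one (by simpa using prob_le_one)
    -- lower bound for the integral
    have hlow : (L + R) * p - R ≤ ∫ ω, ffun δ M L (ZW X a L n ω) ∂μ := by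
      have hptwise : ∀ ω, (D n).indicator (fun _ => L + R) ω - R ≤ ffun δ M L (ZW X a L n ω) := by
        intro ω
        by_cases hω : ω ∈ D n
        · rw [Set.indicator_of_mem hω]
          have : ffun δ M L (ZW X a L n ω) = L := ffun_eq_of_gt hδ hM hL hω
          rw [this]; linarith
        · rw [Set.indicator_of_notMem hω]
          have := le_ffun (δ := δ) (M := M) (L := L) (y := ZW X a L n ω) hδ hM hL
          linarith
      have hind : Integrable (fun ω => (D n).indicator (fun _ => L + R) ω - R) μ :=
        ((integrable_const (L + R)).indicator (hDm n)).sub (integrable_const R)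
      have := integral_mono hind
        (ffun_comp_integrable hδ hM hL μ (ZW_measurable hmeas a L n)) hptwise
      calc (L + R) * p - R
          = ∫ ω, ((D n).indicator (fun _ => L + R) ω - R) ∂μ := by
            rw [integral_sub ((integrable_const (L + R)).indicator (hDm n)) (integrable_const R),
              integral_indicator_const _ (hDm n), integral_const]
            simp [hp]
            rw [measureReal_def]
            ring
        _ ≤ _ := this
    have hup : ∫ ω, ffun δ M L (ZW X a L n ω) ∂μ ≤ a + 1 := by
      have h1 := integral_ffun_ZW_le μ hmeas hindep hident hδ hδ' hM hL hYint hcent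
        hint1 hint2 hMcond a n
      have h2 : ffun δ M L a ≤ a + 1 := by
        have hmax : max a (-M) = a := max_eq_left (by linarith)
        calc ffun δ M L a ≤ gfun δ (max a (-M)) := min_le_right _ _
          _ = gfun δ a := by rw [hmax]
          _ ≤ a + 1 := by simp only [gfun]; nlinarith [Real.exp_pos (-(δ * a))]
      linarith
    have hple : p ≤ (a + (1 + R)) / L := by
      rw [le_div_iff₀ hL0]
      have h3 : L * p ≤ (L + R) * p := by nlinarith
      nlinarith
    calc μ (D n) = ENNReal.ofReal p := by
          rw [hp, ENNReal.ofReal_toReal (measure_ne_top μ _)]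
      _ ≤ ENNReal.ofReal ((a + (1 + R)) / L) := ENNReal.ofReal_le_ofReal hple
  calc μ {ω | hitAbove X a L ω < hitBelow X a 0 ω}
      ≤ μ (⋃ n, D n) := measure_mono subset_union_D
    _ = ⨆ n, μ (D n) := hDmono.measure_iUnion
    _ ≤ ENNReal.ofReal ((a + (1 + R)) / L) := iSup_le hbound

/-! Auxiliary facts for verifying the hypotheses. -/

lemma one_lt_integral_exp_neg (μ : Measure Ω) [IsProbabilityMeasure μ]
    {Y : Ω → ℝ} (hYm : Measurable Y) (hYint : Integrable Y μ)
    (hcent : ∫ ω, Y ω ∂μ = 0) (hne : ¬ (Y =ᵐ[μ] fun _ => (0:ℝ)))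
    {δ : ℝ} (hδ : 0 < δ)
    (hint : Integrable (fun ω => Real.exp (-(δ * Y ω))) μ) :
    1 < ∫ ω, Real.exp (-(δ * Y ω)) ∂μ := by
  classical
  set h : Ω → ℝ := fun ω => if Y ω ≤ 0 then δ^2 * (Y ω * Y ω) / 2 else 0 with hh
  have hh0 : ∀ ω, 0 ≤ h ω := by
    intro ω; simp only [hh]
    split
    · nlinarith [sq_nonneg (Y ω)]
    · exact le_refl 0
  have hpoint : ∀ ω, 1 + (-(δ * Y ω)) + h ω ≤ Real.exp (-(δ * Y ω)) := by
    intro ω; simp only [hh]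
    by_cases hc : Y ω ≤ 0
    · rw [if_pos hc]
      have ht : 0 ≤ -(δ * Y ω) := by nlinarith
      have := Real.quadratic_le_exp_of_nonneg ht
      nlinarith
    · rw [if_neg hc]
      have := Real.add_one_le_exp (-(δ * Y ω))
      linarith
  have hhle : ∀ ω, h ω ≤ Real.exp (-(δ * Y ω)) := by
    intro ω
    have h1 := hpoint ω
    have h2 := hh0 ω
    by_cases hc : Y ω ≤ 0
    · nlinarith
    · push_neg at hc
      simp only [hh, if_neg (not_le.2 hc)]
      exact (Real.exp_pos _).le
  have hhm : Measurable h := by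
    apply Measurable.ite (measurableSet_le hYm measurable_const)
    · exact (((hYm.mul hYm).const_mul _).div_const 2)
    · exact measurable_const
  have hhint : Integrable h μ := by
    refine Integrable.mono' hint hhm.aestronglyMeasurable
      (Eventually.of_forall fun ω => ?_)
    rw [Real.norm_eq_abs, abs_of_nonneg (hh0 ω)]
    exact hhle ω
  have hneg' : Integrable (fun ω => -(δ * Y ω)) μ := (hYint.const_mul δ).neg
  have hf1 : Integrable (fun ω => 1 + -(δ * Y ω)) μ := (integrable_const (1:ℝ)).add hneg'
  have hlin : Integrable (fun ω => 1 + (-(δ * Y ω)) + h ω) μ := hf1.add hhint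
  have hint_lhs : ∫ ω, (1 + (-(δ * Y ω)) + h ω) ∂μ = 1 + ∫ ω, h ω ∂μ := by
    rw [integral_add hf1 hhint, integral_add (integrable_const (1:ℝ)) hneg',
      integral_neg, integral_const_mul, hcent, integral_const]
    simp
  have hmono := integral_mono hlin hint (fun ω => hpoint ω)
  have hpos : 0 < ∫ ω, h ω ∂μ := by
    rcases lt_or_eq_of_le (integral_nonneg (μ := μ) (f := h) hh0) with hgt | heq
    · exact hgt
    · exfalso
      have hzero : h =ᵐ[μ] 0 :=
        (integral_eq_zero_iff_of_nonneg (fun ω => hh0 ω) hhint).1 heq.symm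
      have hae : 0 ≤ᵐ[μ] Y := by
        filter_upwards [hzero] with ω hω
        simp only [hh, Pi.zero_apply] at hω
        simp only [Pi.zero_apply]
        by_contra hneg
        push_neg at hneg
        rw [if_pos hneg.le] at hω
        nlinarith [mul_pos (mul_pos hδ hδ) (mul_pos_of_neg_of_neg hneg hneg)]
      have : Y =ᵐ[μ] 0 := (integral_eq_zero_iff_of_nonneg_ae hae hYint).1 hcent
      exact hne this
  rw [hint_lhs] at hmono
  linarith

lemma integrable_X_of_exp (μ : Measure Ω) [IsProbabilityMeasure μ]
    {Y : Ω → ℝ} (hYm : Measurable Y) {η : ℝ} (hη : 0 < η)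
    (e1 : Integrable (fun ω => Real.exp ((η/2) * Y ω)) μ)
    (e2 : Integrable (fun ω => Real.exp (-(η/2) * Y ω)) μ) :
    Integrable Y μ := by
  refine Integrable.mono' ((e1.add e2).const_mul (2/η)) hYm.aestronglyMeasurable
    (Eventually.of_forall fun ω => ?_)
  rw [Real.norm_eq_abs]
  simp only [Pi.add_apply]
  set x := Y ω with hx
  have hp1 : (η/2) * x ≤ Real.exp ((η/2) * x) := by
    have := Real.add_one_le_exp ((η/2) * x); linarith
  have hp2 : (-(η/2)) * x ≤ Real.exp (-(η/2) * x) := by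
    have := Real.add_one_le_exp ((-(η/2)) * x); linarith
  have he1 : 0 < Real.exp ((η/2) * x) := Real.exp_pos _
  have he2 : 0 < Real.exp (-(η/2) * x) := Real.exp_pos _
  rcases le_or_gt 0 x with hc | hc
  · rw [abs_of_nonneg hc]
    rw [div_mul_eq_mul_div, le_div_iff₀ hη]
    nlinarith
  · rw [abs_of_neg hc]
    rw [div_mul_eq_mul_div, le_div_iff₀ hη]
    nlinarith

lemma M_choice {δ δ' A A' : ℝ} (hδ : 0 < δ) (hδ' : δ < δ') (hA : 1 < A) (hA' : 0 < A') :
    ∃ M : ℝ, 0 ≤ M ∧ (1 + 1/δ) * Real.exp (-((δ' - δ) * M)) * A' ≤ A - 1 := by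
  set q := (1 + 1/δ) * A' / (A - 1) with hq
  have hqpos : 0 < q := by
    apply div_pos (by positivity) (by linarith)
  refine ⟨max 1 (Real.log q / (δ' - δ)), le_trans zero_le_one (le_max_left _ _), ?_⟩
  set Mx := max 1 (Real.log q / (δ' - δ)) with hMx
  have hd : 0 < δ' - δ := by linarith
  have h1 : Real.log q ≤ (δ' - δ) * Mx := by
    rw [mul_comm, ← div_le_iff₀ hd]
    exact le_max_right _ _
  have hqprod : (1 + 1/δ) * A' = q * (A - 1) := by
    rw [hq, div_mul_cancel₀]
    exact sub_ne_zero.2 (ne_of_gt hA)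
  have hexpq : q ≤ Real.exp ((δ' - δ) * Mx) := by
    rw [← Real.exp_log hqpos]
    exact Real.exp_le_exp.2 h1
  have hexpneg : Real.exp (-((δ' - δ) * Mx)) * Real.exp ((δ' - δ) * Mx) = 1 := by
    rw [← Real.exp_add]; simp
  have h3 : Real.exp (-((δ' - δ) * Mx)) * q ≤ 1 := by
    nlinarith [mul_le_mul_of_nonneg_left hexpq (Real.exp_pos (-((δ' - δ) * Mx))).le]
  calc (1 + 1/δ) * Real.exp (-((δ' - δ) * Mx)) * A'
      = Real.exp (-((δ' - δ) * Mx)) * ((1 + 1/δ) * A') := by ring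
    _ = (Real.exp (-((δ' - δ) * Mx)) * q) * (A - 1) := by rw [hqprod]; ring
    _ ≤ 1 * (A - 1) := mul_le_mul_of_nonneg_right h3 (by linarith)
    _ = A - 1 := one_mul _

/-! Mirroring the walk. -/

lemma walk_mirror (X : ℕ → Ω → ℝ) (a L : ℝ) (n : ℕ) (ω : Ω) :
    walk (fun i ω => -(X i ω)) (L - a) n ω = L - walk X a n ω := by
  simp only [walk, Finset.sum_neg_distrib]
  ring

lemma hitBelow_mirror (X : ℕ → Ω → ℝ) (a L : ℝ) (ω : Ω) :
    hitBelow X a 0 ω = hitAbove (fun i ω => -(X i ω)) (L - a) L ω := by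
  simp only [hitBelow, hitAbove]
  refine iInf_congr fun n => ?_
  rw [walk_mirror X a L n ω]
  exact iInf_congr_Prop (by constructor <;> intro <;> linarith) (fun _ => rfl)

lemma hitAbove_mirror (X : ℕ → Ω → ℝ) (a L : ℝ) (ω : Ω) :
    hitAbove X a L ω = hitBelow (fun i ω => -(X i ω)) (L - a) 0 ω := by
  simp only [hitBelow, hitAbove]
  refine iInf_congr fun n => ?_
  rw [walk_mirror X a L n ω]
  exact iInf_congr_Prop (by constructor <;> intro <;> linarith) (fun _ => rfl)

/-- (pal1) and (pal2). For a centered random walk with positive variance and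
exponential moments on `(-(1+η), η)`, there is `c' > 0` such that for all `L ≥ 1` and
`0 ≤ a ≤ L`: `ℙ_a(τ_0^- < τ_L^+) ≤ (L - a + c')/L` and `ℙ_a(τ_0^- > τ_L^+) ≤ (a + c')/L`. -/
theorem centered_exit_probability_bounds
    (μ : Measure Ω) [IsProbabilityMeasure μ]
    (X : ℕ → Ω → ℝ) (hmeas : ∀ i, Measurable (X i))
    (hindep : iIndepFun X μ)
    (hident : ∀ i, IdentDistrib (X i) (X 0) μ μ)
    (hcent : ∫ ω, X 0 ω ∂μ = 0)
    (hvar : 0 < variance (X 0) μ)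
    (η : ℝ) (hη : 0 < η)
    (hexp : ∀ u : ℝ, -(1 + η) < u → u < η →
      Integrable (fun ω => Real.exp (u * X 0 ω)) μ)
    :
    ∃ c : ℝ, 0 < c ∧ ∀ L : ℝ, 1 ≤ L → ∀ a : ℝ, 0 ≤ a → a ≤ L →
      μ {ω | hitBelow X a 0 ω < hitAbove X a L ω} ≤ ENNReal.ofReal ((L - a + c) / L) ∧
      μ {ω | hitAbove X a L ω < hitBelow X a 0 ω} ≤ ENNReal.ofReal ((a + c) / L) := by
  classical
  set δ : ℝ := η / 2 with hδdef
  set δ' : ℝ := 3 * η / 4 with hδ'def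
  have hδ : 0 < δ := by rw [hδdef]; linarith
  have hδδ' : δ < δ' := by rw [hδdef, hδ'def]; linarith
  -- integrability of the increments
  have e1p : Integrable (fun ω => Real.exp ((η/2) * X 0 ω)) μ :=
    hexp (η/2) (by linarith) (by linarith)
  have e2p : Integrable (fun ω => Real.exp (-(η/2) * X 0 ω)) μ :=
    hexp (-(η/2)) (by linarith) (by linarith)
  have hYint : Integrable (X 0) μ := integrable_X_of_exp μ (hmeas 0) hη e1p e2p
  -- exponential moments in the needed form
  have hint1 : Integrable (fun ω => Real.exp (-(δ * X 0 ω))) μ :=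
    (hexp (-δ) (by rw [hδdef]; linarith) (by rw [hδdef]; linarith)).congr
      (Eventually.of_forall fun ω => congrArg Real.exp (neg_mul δ (X 0 ω)))
  have hint2 : Integrable (fun ω => Real.exp (-(δ' * X 0 ω))) μ :=
    (hexp (-δ') (by rw [hδ'def]; linarith) (by rw [hδ'def]; linarith)).congr
      (Eventually.of_forall fun ω => congrArg Real.exp (neg_mul δ' (X 0 ω)))
  have hint1m : Integrable (fun ω => Real.exp (-(δ * (-(X 0 ω))))) μ :=
    (hexp δ (by rw [hδdef]; linarith) (by rw [hδdef]; linarith)).congr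
      (Eventually.of_forall fun ω => congrArg Real.exp (by ring))
  have hint2m : Integrable (fun ω => Real.exp (-(δ' * (-(X 0 ω))))) μ :=
    (hexp δ' (by rw [hδ'def]; linarith) (by rw [hδ'def]; linarith)).congr
      (Eventually.of_forall fun ω => congrArg Real.exp (by ring))
  -- non-degeneracy
  have hne : ¬ (X 0 =ᵐ[μ] fun _ => (0:ℝ)) := by
    intro h
    have hev : evariance (X 0) μ = 0 := by
      rw [evariance_eq_zero_iff (hmeas 0).aemeasurable]
      filter_upwards [h] with ω hω
      rw [hω]
      exact hcent.symm
    have hv0 : variance (X 0) μ = 0 := by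
      rw [variance, hev]; rfl
    rw [hv0] at hvar; exact lt_irrefl 0 hvar
  have hnem : ¬ ((fun ω => -(X 0 ω)) =ᵐ[μ] fun _ => (0:ℝ)) := by
    intro h
    apply hne
    filter_upwards [h] with ω hω
    simpa using congrArg Neg.neg hω
  -- strict Jensen gaps
  have hA : 1 < ∫ ω, Real.exp (-(δ * X 0 ω)) ∂μ :=
    one_lt_integral_exp_neg μ (hmeas 0) hYint hcent hne hδ hint1
  have hA' : 1 < ∫ ω, Real.exp (-(δ' * X 0 ω)) ∂μ :=
    one_lt_integral_exp_neg μ (hmeas 0) hYint hcent hne (lt_trans hδ hδδ') hint2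
  have hcentm : ∫ ω, -(X 0 ω) ∂μ = 0 := by rw [integral_neg, hcent, neg_zero]
  have hYintm : Integrable (fun ω => -(X 0 ω)) μ := hYint.neg
  have hAm : 1 < ∫ ω, Real.exp (-(δ * (-(X 0 ω)))) ∂μ :=
    one_lt_integral_exp_neg μ (hmeas 0).neg hYintm hcentm hnem hδ hint1m
  have hA'm : 1 < ∫ ω, Real.exp (-(δ' * (-(X 0 ω)))) ∂μ :=
    one_lt_integral_exp_neg μ (hmeas 0).neg hYintm hcentm hnem (lt_trans hδ hδδ') hint2m
  -- choose the truncation levels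
  obtain ⟨M₁, hM₁0, hM₁cond⟩ := M_choice (A := ∫ ω, Real.exp (-(δ * X 0 ω)) ∂μ)
    (A' := ∫ ω, Real.exp (-(δ' * X 0 ω)) ∂μ) hδ hδδ' hA (by linarith)
  obtain ⟨M₂, hM₂0, hM₂cond⟩ := M_choice (A := ∫ ω, Real.exp (-(δ * (-(X 0 ω)))) ∂μ)
    (A' := ∫ ω, Real.exp (-(δ' * (-(X 0 ω)))) ∂μ) hδ hδδ' hAm (by linarith)
  set c₁ : ℝ := 1 + (M₁ + Real.exp (δ * M₁)) with hc₁
  set c₂ : ℝ := 1 + (M₂ + Real.exp (δ * M₂)) with hc₂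
  refine ⟨max c₁ c₂, ?_, ?_⟩
  · have : (0:ℝ) < c₁ := by rw [hc₁]; positivity
    exact lt_of_lt_of_le this (le_max_left _ _)
  intro L hL a ha0 haL
  have hL0 : (0:ℝ) < L := by linarith
  -- mirrored process
  set X' : ℕ → Ω → ℝ := fun i ω => -(X i ω) with hX'
  have hmeas' : ∀ i, Measurable (X' i) := fun i => (hmeas i).neg
  have hindep' : iIndepFun X' μ :=
    hindep.comp (fun _ => fun x : ℝ => -x) (fun _ => measurable_neg)
  have hident' : ∀ i, IdentDistrib (X' i) (X' 0) μ μ :=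
    fun i => (hident i).comp measurable_neg
  constructor
  · -- first bound, via the mirrored walk
    have hseteq : {ω | hitBelow X a 0 ω < hitAbove X a L ω}
        = {ω | hitAbove X' (L - a) L ω < hitBelow X' (L - a) 0 ω} := by
      ext ω
      simp only [Set.mem_setOf_eq]
      rw [hitBelow_mirror X a L ω, hitAbove_mirror X a L ω]
    rw [hseteq]
    have hbd := main_up_bound μ hmeas' hindep' hident' hδ hδδ' hM₂0
      hYintm hcentm hint1m hint2m hM₂cond hL (by linarith : (0:ℝ) ≤ L - a)
      (by linarith : L - a ≤ L)
    refine le_trans hbd (ENNReal.ofReal_le_ofReal ?_)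
    have h2 : c₂ ≤ max c₁ c₂ := le_max_right _ _
    rw [hc₂] at h2
    rw [div_le_div_iff₀ hL0 hL0]
    nlinarith
  · have hbd := main_up_bound μ hmeas hindep hident hδ hδδ' hM₁0
      hYint hcent hint1 hint2 hM₁cond hL ha0 haL
    refine le_trans hbd (ENNReal.ofReal_le_ofReal ?_)
    have h2 : c₁ ≤ max c₁ c₂ := le_max_left _ _
    rw [hc₁] at h2
    rw [div_le_div_iff₀ hL0 hL0]
    nlinarith
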